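/- There exist frame data lengths L₁ < L₂ and normalized distances d₁, d₂ > 0 such that T(L₁, d₁) < T(L₂, d₁) and T(L₁, d₂) > T(L₂, d₂), where T(L,d) = (L/(L+51))·(1 − erfc(1/d))^(L+51); in other words, the ordering of normalized throughputs of two frame lengths can reverse as the distance changes. -/

import Mathlib

open Real Set MeasureTheory

/-- The complementary error function: erfc x = (2/√π) ∫_x^∞ exp(−t²) dt. -/
noncomputable def erfc (x : ℝ) : ℝ :=
  (2 / Real.sqrt Real.pi) * ∫ t in Set.Ioi x, Real.exp (-t ^ 2)

lemma gauss_integrableOn (a : ℝ) :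
    IntegrableOn (fun t : ℝ => Real.exp (-t ^ 2)) (Set.Ioi a) := by
  have := (integrable_exp_neg_mul_sq (b := 1) one_pos).integrableOn (s := Set.Ioi a)
  simpa using this

lemma gauss_int_zero : ∫ t in Set.Ioi (0:ℝ), Real.exp (-t ^ 2) = Real.sqrt Real.pi / 2 := by
  have := integral_gaussian_Ioi 1
  simpa using this

lemma sqrt_pi_gt : (1.77 : ℝ) < Real.sqrt Real.pi := by
  rw [show (1.77:ℝ) = Real.sqrt (1.77^2) by rw [Real.sqrt_sq]; norm_num]
  apply Real.sqrt_lt_sqrt (by norm_num)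
  nlinarith [Real.pi_gt_d6]

lemma erfc_one_lt : erfc 1 < 51/104 := by
  have hI : (∫ t in Set.Ioi (1:ℝ), Real.exp (-t ^ 2)) ≤ Real.exp (-1) := by
    have hle : (∫ t in Set.Ioi (1:ℝ), Real.exp (-t ^ 2)) ≤ ∫ t in Set.Ioi (1:ℝ), Real.exp (-t) := by
      apply setIntegral_mono_on (gauss_integrableOn 1) ?_ measurableSet_Ioi ?_
      · have := exp_neg_integrableOn_Ioi 1 (b := 1) one_pos
        simpa using this
      · intro x hx
        apply Real.exp_le_exp.2
        simp only [neg_le_neg_iff]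
        nlinarith [(Set.mem_Ioi.1 hx)]
    calc _ ≤ _ := hle
      _ = Real.exp (-1) := integral_exp_neg_Ioi 1
  have hInn : (0:ℝ) ≤ ∫ t in Set.Ioi (1:ℝ), Real.exp (-t ^ 2) :=
    setIntegral_nonneg measurableSet_Ioi fun x _ => (Real.exp_pos _).le
  have hs := sqrt_pi_gt
  have hsp : (0:ℝ) < Real.sqrt Real.pi := by linarith
  have hexp : Real.exp (-1) < 1/2.7 := by
    rw [Real.exp_neg]
    rw [inv_lt_comm₀ (Real.exp_pos 1) (by norm_num)]
    have := Real.exp_one_gt_d9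
    norm_num at this ⊢
    linarith
  unfold erfc
  rw [div_mul_eq_mul_div, div_lt_iff₀ hsp]
  nlinarith

lemma erfc_tenth : 51/104 < erfc (1/10) ∧ erfc (1/10) < 1 := by
  set J := ∫ t in Set.Ioc (0:ℝ) (1/10), Real.exp (-t ^ 2) with hJ
  have hint1 : IntegrableOn (fun t : ℝ => Real.exp (-t ^ 2)) (Set.Ioc 0 (1/10)) :=
    (gauss_integrableOn 0).mono_set Set.Ioc_subset_Ioi_self
  have hsplit : J + (∫ t in Set.Ioi ((1:ℝ)/10), Real.exp (-t ^ 2)) = Real.sqrt Real.pi / 2 := by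
    rw [hJ, ← gauss_int_zero, ← setIntegral_union (Set.Ioc_disjoint_Ioi le_rfl)
      measurableSet_Ioi hint1 (gauss_integrableOn _), Set.Ioc_union_Ioi_eq_Ioi (by norm_num)]
  have hJpos : 0 < J := by
    rw [hJ, setIntegral_pos_iff_support_of_nonneg_ae]
    · have : (Function.support fun t : ℝ => Real.exp (-t ^ 2)) = Set.univ := by
        ext x; simp [Function.support, (Real.exp_pos _).ne']
      rw [this, Set.univ_inter]
      simp [Real.volume_Ioc]
    · filter_upwards with x using (Real.exp_pos _).le
    · exact hint1
  have hJle : J ≤ 1/10 := by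
    have := norm_setIntegral_le_of_norm_le_const (μ := volume) (s := Set.Ioc (0:ℝ) (1/10))
      (C := 1) (f := fun t : ℝ => Real.exp (-t ^ 2)) (by simp [Real.volume_Ioc])
      (fun x _ => by
        rw [Real.norm_eq_abs, abs_of_pos (Real.exp_pos _)]
        exact Real.exp_le_one_iff.2 (by nlinarith [sq_nonneg x]))
    rw [measureReal_def, Real.volume_Ioc] at this
    have h2 : ENNReal.toReal (ENNReal.ofReal (1/10 - 0)) = 1/10 := by
      rw [ENNReal.toReal_ofReal] <;> norm_num
    calc J ≤ ‖J‖ := le_abs_self J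
      _ ≤ 1 * ENNReal.toReal (ENNReal.ofReal (1/10 - 0)) := this
      _ = 1/10 := by rw [h2]; ring
  have hs := sqrt_pi_gt
  have hsp : (0:ℝ) < Real.sqrt Real.pi := by linarith
  have herfc : erfc (1/10) = 1 - 2/Real.sqrt Real.pi * J := by
    unfold erfc
    have : (∫ t in Set.Ioi ((1:ℝ)/10), Real.exp (-t ^ 2)) = Real.sqrt Real.pi / 2 - J := by
      linarith
    rw [this]
    field_simp
  constructor
  · rw [herfc]
    rw [div_mul_eq_mul_div]
    have h : 2 * J / Real.sqrt Real.pi < 53/104 := by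
      rw [div_lt_iff₀ hsp]; nlinarith
    linarith
  · rw [herfc]
    have : 0 < 2/Real.sqrt Real.pi * J := by positivity
    linarith

/-- Normalized throughput of a frame of data length `L` bits with overhead 51 bits
at normalized distance `d`: T(L,d) = (L/(L+51))·(1 − erfc(1/d))^(L+51). -/
noncomputable def T (L : ℕ) (d : ℝ) : ℝ :=
  ((L : ℝ) / (L + 51)) * (1 - erfc (1 / d)) ^ (L + 51)

/-- The ordering of normalized throughputs of two frame lengths can reverse as the
distance changes: there are L₁ < L₂ and distances d₁, d₂ > 0 with
T(L₁, d₁) < T(L₂, d₁) and T(L₁, d₂) > T(L₂, d₂). -/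
theorem throughput_ordering_can_reverse :
    ∃ (L₁ L₂ : ℕ) (d₁ d₂ : ℝ), L₁ < L₂ ∧ 0 < d₁ ∧ 0 < d₂ ∧
      T L₁ d₁ < T L₂ d₁ ∧ T L₁ d₂ > T L₂ d₂ := by
  refine ⟨1, 2, 1, 10, by norm_num, by norm_num, by norm_num, ?_, ?_⟩
  · have h1 := erfc_one_lt
    simp only [T]
    norm_num
    set q := 1 - erfc 1 with hq
    have hq1 : 53/104 < q := by rw [hq]; linarith
    have hqpos : 0 < q := by linarith
    have h52 : (0:ℝ) < q ^ 52 := pow_pos hqpos 52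
    rw [show q ^ 53 = q ^ 52 * q by ring]
    nlinarith [mul_lt_mul_of_pos_left hq1 h52]
  · obtain ⟨h2, h3⟩ := erfc_tenth
    simp only [T, gt_iff_lt]
    norm_num
    set r := 1 - erfc (1/10) with hr
    have hr1 : r < 53/104 := by rw [hr]; linarith
    have hrpos : 0 < r := by rw [hr]; linarith
    have h52 : (0:ℝ) < r ^ 52 := pow_pos hrpos 52
    rw [show r ^ 53 = r ^ 52 * r by ring]
    nlinarith [mul_lt_mul_of_pos_left hr1 h52]
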